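/- The number of strictly closing (SC) configurations B ⊆ Fin 3 × Fin 3 with exactly k black cells is: 1 for k = 0, 5 for k = 1, 10 for k = 2, 4 for k = 3, 1 for k = 4, and 0 for every k ≥ 5 (these are the coefficients of the combinatorial polynomial Q̄₍₂,₃₎(q) = q⁹ + 5q⁸p + 10q⁷p² + 4q⁶p³ + q⁵p⁴). -/

import Mathlib

/-- Face-adjacency on the 3×3 grid: agree in one coordinate, differ by exactly 1 in the other. -/
def Adj3 (a b : Fin 3 × Fin 3) : Prop :=
  (a.1 = b.1 ∧ (a.2.val + 1 = b.2.val ∨ b.2.val + 1 = a.2.val)) ∨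
  (a.2 = b.2 ∧ (a.1.val + 1 = b.1.val ∨ b.1.val + 1 = a.1.val))


/-- A set of cells is connected under face-adjacency. -/
def Connected3 (C : Set (Fin 3 × Fin 3)) : Prop :=
  ∀ x ∈ C, ∀ y ∈ C, Relation.ReflTransGen (fun a b => a ∈ C ∧ b ∈ C ∧ Adj3 a b) x y

/-- The four sides of the 3×3 grid. -/
def Sides3 : Set (Set (Fin 3 × Fin 3)) :=
  {{c | c.1 = 0}, {c | c.1 = 2}, {c | c.2 = 0}, {c | c.2 = 2}}

/-- A set of black cells is a strictly closing (SC) configuration: no connected subset of it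
meets two distinct sides of the grid. -/
def SC3 (B : Set (Fin 3 × Fin 3)) : Prop :=
  ∀ C ⊆ B, Connected3 C →
    ¬ ∃ S₁ ∈ Sides3, ∃ S₂ ∈ Sides3, S₁ ≠ S₂ ∧ (C ∩ S₁).Nonempty ∧ (C ∩ S₂).Nonempty

abbrev Cell := Fin 3 × Fin 3

instance : DecidablePred (fun p : Cell × Cell => Adj3 p.1 p.2) := fun p => by
  unfold Adj3; infer_instance

instance adj3Dec : ∀ a b : Cell, Decidable (Adj3 a b) := fun a b => by
  unfold Adj3; infer_instance

lemma adj3_symm : ∀ a b : Cell, Adj3 a b → Adj3 b a := by decide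

def nbr (s t : Finset Cell) : Finset Cell :=
  t ∪ s.filter (fun b => ∃ a ∈ t, a ∈ s ∧ Adj3 a b)

def reach (s : Finset Cell) (x : Cell) : ℕ → Finset Cell
  | 0 => {x}
  | n + 1 => nbr s (reach s x n)

lemma reach_mono (s : Finset Cell) (x : Cell) (n : ℕ) :
    reach s x n ⊆ reach s x (n + 1) := Finset.subset_union_left

lemma reach_mono_le (s : Finset Cell) (x : Cell) {m n : ℕ} (h : m ≤ n) :
    reach s x m ⊆ reach s x n := by
  induction n with
  | zero => simp_all
  | succ n ih =>
    rcases Nat.lt_or_ge m (n+1) with h'|h'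
    · exact (ih (Nat.lt_succ_iff.mp h')).trans (reach_mono s x n)
    · have : m = n + 1 := le_antisymm h h'
      subst this; exact subset_rfl

lemma reach_stab (s : Finset Cell) (x : Cell) (n : ℕ)
    (h : reach s x (n + 1) = reach s x n) :
    ∀ m, n ≤ m → reach s x m = reach s x n := by
  intro m hm
  induction m, hm using Nat.le_induction with
  | base => rfl
  | succ m hm ih =>
    show nbr s (reach s x m) = reach s x n
    rw [ih]; exact h

lemma reach_grow (s : Finset Cell) (x : Cell) :
    ∀ n, reach s x (n + 1) = reach s x n ∨ n + 2 ≤ (reach s x (n + 1)).card := by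
  intro n
  induction n with
  | zero =>
    by_cases h : reach s x 1 = reach s x 0
    · exact Or.inl h
    · right
      have hss : reach s x 0 ⊂ reach s x 1 := (reach_mono s x 0).ssubset_of_ne (Ne.symm h)
      have := Finset.card_lt_card hss
      have h0 : (reach s x 0).card = 1 := by simp [reach]
      show 2 ≤ (reach s x 1).card
      omega
  | succ n ih =>
    by_cases h : reach s x (n + 2) = reach s x (n + 1)
    · exact Or.inl h
    · right
      have hss : reach s x (n+1) ⊂ reach s x (n+2) :=
        (reach_mono s x (n+1)).ssubset_of_ne (Ne.symm h)
      have hc := Finset.card_lt_card hss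
      rcases ih with heq | hcard
      · exfalso; apply h
        show nbr s (reach s x (n+1)) = reach s x (n+1)
        rw [heq]; exact heq
      · show n + 3 ≤ (reach s x (n + 2)).card
        omega

lemma reach_stable8 (s : Finset Cell) (x : Cell) :
    ∀ m, 8 ≤ m → reach s x m = reach s x 8 := by
  have hcard : (reach s x 9).card ≤ 9 := by
    have := Finset.card_le_univ (reach s x 9)
    simpa using this
  rcases reach_grow s x 8 with h | h
  · exact reach_stab s x 8 h
  · have h' : (10:ℕ) ≤ (reach s x 9).card := h
    omega

def rrel (B : Set Cell) (a b : Cell) : Prop := a ∈ B ∧ b ∈ B ∧ Adj3 a b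

lemma reach_sound (s : Finset Cell) (x : Cell) (n : ℕ) :
    ∀ y ∈ reach s x n, Relation.ReflTransGen (rrel ↑s) x y := by
  induction n with
  | zero =>
    intro y hy
    have : y = x := by simpa [reach] using hy
    subst this; exact Relation.ReflTransGen.refl
  | succ n ih =>
    intro y hy
    rcases Finset.mem_union.mp hy with h | h
    · exact ih y h
    · rcases Finset.mem_filter.mp h with ⟨hys, a, ha, has, hadj⟩
      exact (ih a ha).tail ⟨has, hys, hadj⟩

lemma reach_complete (s : Finset Cell) (x y : Cell)
    (h : Relation.ReflTransGen (rrel ↑s) x y) : y ∈ reach s x 8 := by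
  have : ∃ n, y ∈ reach s x n := by
    induction h with
    | refl => exact ⟨0, by simp [reach]⟩
    | tail hab hr ih =>
      rcases ih with ⟨n, hn⟩
      rcases hr with ⟨has, hbs, hadj⟩
      refine ⟨n + 1, Finset.mem_union.mpr (Or.inr ?_)⟩
      exact Finset.mem_filter.mpr ⟨hbs, _, hn, has, hadj⟩
  rcases this with ⟨n, hn⟩
  rcases Nat.le_total n 8 with h' | h'
  · exact reach_mono_le s x h' hn
  · rw [← reach_stable8 s x n h']; exact hn

def memSide (i : Fin 4) (c : Cell) : Prop :=
  (i = 0 ∧ c.1 = 0) ∨ (i = 1 ∧ c.1 = 2) ∨ (i = 2 ∧ c.2 = 0) ∨ (i = 3 ∧ c.2 = 2)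

instance : ∀ i c, Decidable (memSide i c) := fun i c => by unfold memSide; infer_instance

def side (i : Fin 4) : Set Cell := {c | memSide i c}

lemma side_inj : ∀ i j : Fin 4, (∀ c, memSide i c ↔ memSide j c) → i = j := by decide

lemma Sides3_eq : Sides3 = {side 0, side 1, side 2, side 3} := by
  have h0 : side 0 = {c : Cell | c.1 = 0} := by ext c; simp [side, memSide]
  have h1 : side 1 = {c : Cell | c.1 = 2} := by ext c; simp [side, memSide]
  have h2 : side 2 = {c : Cell | c.2 = 0} := by ext c; simp [side, memSide]
  have h3 : side 3 = {c : Cell | c.2 = 2} := by ext c; simp [side, memSide]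
  rw [Sides3, h0, h1, h2, h3]

def bad (x y : Cell) : Prop := ∃ i j : Fin 4, i ≠ j ∧ memSide i x ∧ memSide j y

instance : ∀ x y, Decidable (bad x y) := fun x y => by unfold bad; infer_instance

lemma bad_iff (x y : Cell) :
    (∃ S₁ ∈ Sides3, ∃ S₂ ∈ Sides3, S₁ ≠ S₂ ∧ x ∈ S₁ ∧ y ∈ S₂) ↔ bad x y := by
  rw [Sides3_eq]
  constructor
  · rintro ⟨S₁, hS₁, S₂, hS₂, hne, hx, hy⟩
    simp only [Set.mem_insert_iff, Set.mem_singleton_iff] at hS₁ hS₂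
    have h₁ : ∃ i : Fin 4, S₁ = side i := by
      rcases hS₁ with h|h|h|h <;> exact ⟨_, h⟩
    have h₂ : ∃ j : Fin 4, S₂ = side j := by
      rcases hS₂ with h|h|h|h <;> exact ⟨_, h⟩
    rcases h₁ with ⟨i, rfl⟩; rcases h₂ with ⟨j, rfl⟩
    refine ⟨i, j, fun hij => hne (by rw [hij]), hx, hy⟩
  · rintro ⟨i, j, hij, hx, hy⟩
    refine ⟨side i, ?_, side j, ?_, ?_, hx, hy⟩
    · fin_cases i <;> simp
    · fin_cases j <;> simp
    · intro h
      exact hij (side_inj i j (Set.ext_iff.mp h))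

/-- Pairwise characterization of SC3. -/
lemma SC3_iff_pairwise (B : Set Cell) :
    SC3 B ↔ ∀ x ∈ B, ∀ y ∈ B, Relation.ReflTransGen (rrel B) x y → ¬ bad x y := by
  constructor
  · intro hSC x hx y hy hxy hbad
    rcases (bad_iff x y).mpr hbad with ⟨S₁, hS₁, S₂, hS₂, hne, hxS, hyS⟩
    set C : Set Cell := {z | z ∈ B ∧ Relation.ReflTransGen (rrel B) x z} with hC
    have hCB : C ⊆ B := fun z hz => hz.1
    have hxC : x ∈ C := ⟨hx, Relation.ReflTransGen.refl⟩
    have hyC : y ∈ C := ⟨hy, hxy⟩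
    -- paths from x in B stay in C
    have key : ∀ z, Relation.ReflTransGen (rrel B) x z → Relation.ReflTransGen (rrel C) x z := by
      intro z hz
      induction hz with
      | refl => exact Relation.ReflTransGen.refl
      | @tail b c hab hr ih =>
        have hbC : b ∈ C := ⟨hr.1, Relation.ReflTransGen.mono (fun u v (h : rrel C u v) => (⟨h.1.1, h.2.1.1, h.2.2⟩ : rrel B u v)) _ _ ih⟩
        have hcC : c ∈ C := ⟨hr.2.1, (Relation.ReflTransGen.mono (fun u v (h : rrel C u v) => (⟨h.1.1, h.2.1.1, h.2.2⟩ : rrel B u v)) _ _ ih).tail hr⟩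
        exact ih.tail ⟨hbC, hcC, hr.2.2⟩
    have hsymm : Symmetric (rrel C) := fun a b h => ⟨h.2.1, h.1, adj3_symm a b h.2.2⟩
    have hconn : Connected3 C := by
      intro u hu v hv
      have hu' := key u hu.2
      have hv' := key v hv.2
      exact (haveI : Std.Symm (rrel C) := ⟨hsymm⟩; Std.Symm.symm (r := Relation.ReflTransGen (rrel C)) _ _ hu').trans hv'
    exact hSC C hCB hconn ⟨S₁, hS₁, S₂, hS₂, hne, ⟨x, hxC, hxS⟩, ⟨y, hyC, hyS⟩⟩
  · rintro h C hCB hconn ⟨S₁, hS₁, S₂, hS₂, hne, ⟨x, hxC, hxS⟩, ⟨y, hyC, hyS⟩⟩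
    have hpath : Relation.ReflTransGen (rrel B) x y :=
      Relation.ReflTransGen.mono (fun u v (hr : u ∈ C ∧ v ∈ C ∧ Adj3 u v) => (⟨hCB hr.1, hCB hr.2.1, hr.2.2⟩ : rrel B u v))
        _ _ (hconn x hxC y hyC)
    exact h x (hCB hxC) y (hCB hyC) hpath ((bad_iff x y).mp ⟨S₁, hS₁, S₂, hS₂, hne, hxS, hyS⟩)

/-- Decidable version of SC3 on finsets. -/
def DSC (s : Finset Cell) : Prop :=
  ∀ x ∈ s, ∀ y ∈ reach s x 8, ¬ bad x y

instance : DecidablePred DSC := fun s => by unfold DSC; infer_instance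

lemma SC3_coe_iff (s : Finset Cell) : SC3 ↑s ↔ DSC s := by
  rw [SC3_iff_pairwise]
  constructor
  · intro h x hx y hy hbad
    have hpath := reach_sound s x 8 y hy
    rcases Relation.ReflTransGen.cases_tail hpath with heq | ⟨b, _, hr⟩
    · exact h x (by simpa using hx) x (by simpa using hx) Relation.ReflTransGen.refl
        (heq ▸ hbad)
    · exact h x (by simpa using hx) y hr.2.1 hpath hbad
  · intro h x hx y _ hxy hbad
    exact h x (by simpa using hx) y (reach_complete s x y hxy) hbad

open Classical in
lemma ncard_setOf (P : Set Cell → Prop) :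
    {B : Set Cell | P B}.ncard =
      ((Finset.univ : Finset (Finset Cell)).filter
        (fun s : Finset Cell => P (↑s : Set Cell))).card := by
  classical
  have himg : {B : Set Cell | P B} =
      (fun s : Finset Cell => (↑s : Set Cell)) ''
        ↑((Finset.univ : Finset (Finset Cell)).filter
          (fun s : Finset Cell => P (↑s : Set Cell))) := by
    ext B
    simp only [Set.mem_image, Finset.mem_coe, Finset.mem_filter, Finset.mem_univ, true_and,
      Set.mem_setOf_eq]
    constructor
    · intro hB
      refine ⟨(Set.toFinite B).toFinset, ?_, Set.Finite.coe_toFinset _⟩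
      rw [Set.Finite.coe_toFinset]; exact hB
    · rintro ⟨s, hs, rfl⟩; exact hs
  rw [himg, Set.ncard_image_of_injective _ Finset.coe_injective, Set.ncard_coe_finset]

open Classical in
lemma count_k (k : ℕ) :
    {B : Set Cell | B.ncard = k ∧ SC3 B}.ncard =
      ((Finset.univ : Finset (Finset Cell)).filter
        (fun s : Finset Cell => s.card = k ∧ DSC s)).card := by
  rw [ncard_setOf (fun B => B.ncard = k ∧ SC3 B)]
  congr 1
  apply Finset.ext
  intro s
  simp only [Finset.mem_filter, Finset.mem_univ, true_and, Set.ncard_coe_finset, SC3_coe_iff]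

set_option maxRecDepth 100000 in
set_option maxHeartbeats 4000000 in
lemma test0 : ((Finset.univ : Finset (Finset Cell)).filter
    (fun s : Finset Cell => s.card = 0 ∧ DSC s)).card = 1 := by decide

set_option maxRecDepth 100000 in

set_option maxRecDepth 1000000 in
set_option maxHeartbeats 4000000 in
lemma test1 : ((Finset.univ : Finset (Finset Cell)).filter
    (fun s : Finset Cell => s.card = 1 ∧ DSC s)).card = 5 := by decide

set_option maxRecDepth 1000000 in
set_option maxHeartbeats 4000000 in
lemma test2 : ((Finset.univ : Finset (Finset Cell)).filter
    (fun s : Finset Cell => s.card = 2 ∧ DSC s)).card = 10 := by decide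

set_option maxRecDepth 1000000 in
set_option maxHeartbeats 4000000 in
lemma test3 : ((Finset.univ : Finset (Finset Cell)).filter
    (fun s : Finset Cell => s.card = 3 ∧ DSC s)).card = 4 := by decide

set_option maxRecDepth 1000000 in
set_option maxHeartbeats 4000000 in
lemma test4 : ((Finset.univ : Finset (Finset Cell)).filter
    (fun s : Finset Cell => s.card = 4 ∧ DSC s)).card = 1 := by decide

set_option maxRecDepth 1000000 in
set_option maxHeartbeats 8000000 in
lemma no5 : ∀ s : Finset Cell, s.card = 5 → ¬ DSC s := by decide

lemma SC3_mono {A B : Set Cell} (h : SC3 B) (hAB : A ⊆ B) : SC3 A :=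
  fun C hCA hconn => h C (hCA.trans hAB) hconn

/-- The number of SC configurations with exactly k black cells is 1, 5, 10, 4, 1
for k = 0, 1, 2, 3, 4 and 0 for every k ≥ 5. -/
theorem count_strictly_closing_configurations :
    {B : Set (Fin 3 × Fin 3) | B.ncard = 0 ∧ SC3 B}.ncard = 1 ∧
    {B : Set (Fin 3 × Fin 3) | B.ncard = 1 ∧ SC3 B}.ncard = 5 ∧
    {B : Set (Fin 3 × Fin 3) | B.ncard = 2 ∧ SC3 B}.ncard = 10 ∧
    {B : Set (Fin 3 × Fin 3) | B.ncard = 3 ∧ SC3 B}.ncard = 4 ∧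
    {B : Set (Fin 3 × Fin 3) | B.ncard = 4 ∧ SC3 B}.ncard = 1 ∧
    ∀ k : ℕ, 5 ≤ k → {B : Set (Fin 3 × Fin 3) | B.ncard = k ∧ SC3 B}.ncard = 0 := by
  refine ⟨?_, ?_, ?_, ?_, ?_, ?_⟩
  · rw [count_k 0]; exact test0
  · rw [count_k 1]; exact test1
  · rw [count_k 2]; exact test2
  · rw [count_k 3]; exact test3
  · rw [count_k 4]; exact test4
  · intro k hk
    have hempty : {B : Set Cell | B.ncard = k ∧ SC3 B} = ∅ := by
      ext B
      simp only [Set.mem_setOf_eq, Set.mem_empty_iff_false, iff_false, not_and]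
      intro hcard hSC
      obtain ⟨A, hAB, hA5⟩ := Set.exists_subset_card_eq (show 5 ≤ B.ncard by omega)
      have hSCA := SC3_mono hSC hAB
      have hfin : A.Finite := Set.toFinite A
      have hcoe : (↑hfin.toFinset : Set Cell) = A := hfin.coe_toFinset
      have hDSC : DSC hfin.toFinset := (SC3_coe_iff _).mp (by rw [hcoe]; exact hSCA)
      have hcard5 : hfin.toFinset.card = 5 := by
        rw [← Set.ncard_coe_finset, hcoe]; exact hA5
      exact no5 _ hcard5 hDSC
    rw [hempty, Set.ncard_empty]
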